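/- Pawlikowska's extension of Flett's theorem: Let a < b, let n ≥ 1, and let f : ℝ → ℝ be n times differentiable at every point of the closed interval [a, b] (one-sided derivatives at the endpoints), with f⁽ⁿ⁾(a) = f⁽ⁿ⁾(b). Then there exists ξ ∈ (a, b) such that f(ξ) - f(a) = ∑_{i=1}^{n} ((-1)^{i+1} / i!) * (ξ - a)^i * f⁽ⁱ⁾(ξ). -/

import Mathlib

open Set Filter Topology

private lemma poly_hasDeriv (c : ℕ → ℝ) (m : ℕ) (s : Set ℝ) (a x : ℝ) :
    HasDerivWithinAt
      (fun y => ∑ j ∈ Finset.range (m + 1), c j * (y - a) ^ j / (Nat.factorial j))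
      (∑ j ∈ Finset.range m, c (j + 1) * (x - a) ^ j / (Nat.factorial j)) s x := by
  induction m with
  | zero =>
      simp only [Finset.sum_range_one, Finset.sum_range_zero, pow_zero, Nat.factorial_zero]
      simpa using (hasDerivWithinAt_const x s (c 0 * 1 / 1))
  | succ m ih =>
      have hterm : HasDerivWithinAt
          (fun y => c (m + 1) * (y - a) ^ (m + 1) / ((m + 1).factorial : ℝ))
          (c (m + 1) * (x - a) ^ m / (m.factorial : ℝ)) s x := by
        have h1 : HasDerivWithinAt (fun y => (y - a) ^ (m + 1))
            ((m + 1 : ℕ) * (x - a) ^ m * 1) s x :=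
          ((hasDerivWithinAt_id x s).sub_const a).pow (m + 1)
        have h2 : HasDerivWithinAt _ _ s x := (h1.const_mul (c (m + 1))).div_const ((m + 1).factorial : ℝ)
        refine h2.congr_deriv ?_
        have hm : ((m + 1).factorial : ℝ) = (m + 1) * m.factorial := by
          rw [Nat.factorial_succ]; push_cast; ring
        have hmf : (m.factorial : ℝ) ≠ 0 := Nat.cast_ne_zero.mpr (Nat.factorial_ne_zero m)
        rw [hm]
        field_simp
        push_cast
        ring
      have this : HasDerivWithinAt _ _ s x := ih.add hterm
      refine HasDerivWithinAt.congr_deriv (this.congr (fun y _ => ?_) ?_) ?_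
      · rw [Finset.sum_range_succ, Pi.add_apply]
      · rw [Finset.sum_range_succ, Pi.add_apply]
      · rw [Finset.sum_range_succ]

private noncomputable def Rrem (F : ℕ → ℝ → ℝ) (a : ℝ) (n k : ℕ) : ℝ → ℝ :=
  fun x => F k x - ∑ j ∈ Finset.range (n - k + 1), F (k + j) a * (x - a) ^ j / (Nat.factorial j)

private lemma Rrem_a (F : ℕ → ℝ → ℝ) (a : ℝ) (n k : ℕ) : Rrem F a n k a = 0 := by
  unfold Rrem
  rw [Finset.sum_eq_single 0]
  · simp
  · intro j _ hj
    rcases Nat.exists_eq_succ_of_ne_zero hj with ⟨i, rfl⟩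
    simp
  · intro h
    simp at h

private lemma Rrem_deriv (F : ℕ → ℝ → ℝ) (a b : ℝ) (n : ℕ)
    (hF : ∀ i < n, ∀ x ∈ Set.Icc a b, HasDerivWithinAt (F i) (F (i + 1) x) (Set.Icc a b) x)
    (k : ℕ) (hk : k < n) (x : ℝ) (hx : x ∈ Set.Icc a b) :
    HasDerivWithinAt (Rrem F a n k) (Rrem F a n (k + 1) x) (Set.Icc a b) x := by
  have hp := poly_hasDeriv (fun j => F (k + j) a) (n - k) (Set.Icc a b) a x
  have hnk : n - k = (n - (k + 1)) + 1 := by omega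
  have h : HasDerivWithinAt _ _ (Set.Icc a b) x := (hF k hk x hx).sub hp
  unfold Rrem
  refine h.congr_deriv ?_
  rw [hnk]
  congr 1
  refine Finset.sum_congr rfl fun j _ => ?_
  rw [show k + 1 + j = k + (j + 1) from by omega]

private lemma Rrem_bound (F : ℕ → ℝ → ℝ) (a b : ℝ) (n : ℕ) (hab : a < b) (hn : 1 ≤ n)
    (hF : ∀ i < n, ∀ x ∈ Set.Icc a b, HasDerivWithinAt (F i) (F (i + 1) x) (Set.Icc a b) x)
    (ε : ℝ) (hε : 0 < ε) :
    ∃ δ > 0, ∀ k < n, ∀ x ∈ Set.Ioc a b, x - a < δ → |Rrem F a n k x| ≤ ε * (x - a) ^ (n - k) := by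
  -- base : little-o at a for F (n-1)
  have ha : a ∈ Set.Icc a b := ⟨le_rfl, hab.le⟩
  have hlo := hasDerivWithinAt_iff_isLittleO.mp (hF (n - 1) (by omega) a ha)
  have hev : ∀ᶠ x in 𝓝[Set.Icc a b] a,
      ‖F (n - 1) x - F (n - 1) a - (x - a) • F n a‖ ≤ ε * ‖x - a‖ := by
    have := (Asymptotics.isLittleO_iff.mp hlo) hε
    have hidx : n - 1 + 1 = n := by omega
    rw [hidx] at this
    exact this
  obtain ⟨δ, hδ, hball⟩ := Metric.mem_nhdsWithin_iff.mp hev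
  refine ⟨δ, hδ, ?_⟩
  -- rewrite the base case in terms of Rrem
  have hbase : ∀ x ∈ Set.Ioc a b, x - a < δ → |Rrem F a n (n - 1) x| ≤ ε * (x - a) ^ 1 := by
    intro x hx hxδ
    have hx' : x ∈ Metric.ball a δ ∩ Set.Icc a b := by
      constructor
      · rw [Metric.mem_ball, Real.dist_eq, abs_of_nonneg (by linarith [hx.1])]
        exact hxδ
      · exact ⟨hx.1.le, hx.2⟩
    have h := hball hx'
    have hxa : (0:ℝ) ≤ x - a := by linarith [hx.1]
    have hR : Rrem F a n (n - 1) x = F (n - 1) x - F (n - 1) a - (x - a) * F n a := by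
      unfold Rrem
      have h2 : n - (n - 1) + 1 = 2 := by omega
      rw [h2, Finset.sum_range_succ, Finset.sum_range_one]
      have h3 : n - 1 + 1 = n := by omega
      rw [h3]
      simp [Nat.factorial]
      ring
    rw [hR, pow_one]
    calc |F (n - 1) x - F (n - 1) a - (x - a) * F n a| ≤ ε * ‖x - a‖ := by
          simpa [Real.norm_eq_abs, smul_eq_mul] using h
      _ = ε * (x - a) := by rw [Real.norm_eq_abs, abs_of_nonneg hxa]
  -- induction
  have main : ∀ j, j ≤ n - 1 → ∀ x ∈ Set.Ioc a b, x - a < δ →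
      |Rrem F a n (n - 1 - j) x| ≤ ε * (x - a) ^ (j + 1) := by
    intro j
    induction j with
    | zero => intro _ x hx hxδ; simpa using hbase x hx hxδ
    | succ j ih =>
      intro hj x hx hxδ
      have ihj := ih (by omega)
      set k0 := n - 1 - (j + 1) with hk0
      have hk0n : k0 < n := by omega
      have hk01 : k0 + 1 = n - 1 - j := by omega
      have hax : a < x := hx.1
      have hcont0 : ContinuousOn (Rrem F a n k0) (Set.Icc a b) :=
        fun y hy => (Rrem_deriv F a b n hF k0 hk0n y hy).continuousWithinAt
      have hcont : ContinuousOn (Rrem F a n k0) (Set.Icc a x) :=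
        hcont0.mono (Set.Icc_subset_Icc le_rfl hx.2)
      have hder : ∀ y ∈ Set.Ioo a x, HasDerivAt (Rrem F a n k0) (Rrem F a n (k0 + 1) y) y := by
        intro y hy
        have hy' : y ∈ Set.Icc a b := ⟨hy.1.le, le_trans hy.2.le hx.2⟩
        exact (Rrem_deriv F a b n hF k0 hk0n y hy').hasDerivAt
          (Icc_mem_nhds hy.1 (lt_of_lt_of_le hy.2 hx.2))
      obtain ⟨c, hc, hceq⟩ := exists_hasDerivAt_eq_slope (Rrem F a n k0) (Rrem F a n (k0 + 1))
        hax hcont hder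
      rw [Rrem_a] at hceq
      have hxa0 : (0:ℝ) < x - a := by linarith
      have hRx : Rrem F a n k0 x = Rrem F a n (k0 + 1) c * (x - a) := by
        rw [hceq, sub_zero]; field_simp
      have hcIoc : c ∈ Set.Ioc a b := ⟨hc.1, le_trans hc.2.le hx.2⟩
      have hcδ : c - a < δ := by linarith [hc.2]
      have hbnd := ihj c hcIoc hcδ
      rw [← hk01] at hbnd
      have hca : (0:ℝ) ≤ c - a := by linarith [hc.1]
      calc |Rrem F a n k0 x| = |Rrem F a n (k0 + 1) c| * (x - a) := by
            rw [hRx, abs_mul, abs_of_pos hxa0]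
        _ ≤ ε * (c - a) ^ (j + 1) * (x - a) := by
            apply mul_le_mul_of_nonneg_right hbnd hxa0.le
        _ ≤ ε * (x - a) ^ (j + 1) * (x - a) := by
            have h1 := pow_le_pow_left₀ hca (by linarith [hc.2] : c - a ≤ x - a) (j + 1)
            have h2 : (0:ℝ) ≤ ε * (x - a) := by positivity
            nlinarith
        _ = ε * (x - a) ^ (j + 1 + 1) := by ring
  intro k hk x hx hxδ
  have hj : n - 1 - (n - 1 - k) = k := by omega
  have hj2 : n - 1 - k + 1 = n - k := by omega
  have := main (n - 1 - k) (by omega) x hx hxδ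
  rw [hj, hj2] at this
  exact this

private lemma H_decomp (F : ℕ → ℝ → ℝ) (a : ℝ) (n : ℕ) (x : ℝ) :
    (∑ k ∈ Finset.range n, (a - x) ^ k / (Nat.factorial k) * F k x) - F 0 a
      = (-1 : ℝ) ^ (n + 1) * (x - a) ^ n * F n a / (Nat.factorial n)
        + ∑ k ∈ Finset.range n, (a - x) ^ k / (Nat.factorial k) * Rrem F a n k x := by
  set f : ℕ → ℕ → ℝ :=
    fun k j => (-1 : ℝ) ^ k * (x - a) ^ (k + j) * F (k + j) a / (Nat.factorial k * Nat.factorial j)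
    with hf
  have key : ∑ k ∈ Finset.range n, (a - x) ^ k / (Nat.factorial k) *
      (∑ j ∈ Finset.range (n - k + 1), F (k + j) a * (x - a) ^ j / (Nat.factorial j))
      = F 0 a + (-1 : ℝ) ^ (n + 1) * (x - a) ^ n * F n a / (Nat.factorial n) := by
    have step1 : ∀ k ∈ Finset.range n, (a - x) ^ k / (Nat.factorial k) *
        (∑ j ∈ Finset.range (n - k + 1), F (k + j) a * (x - a) ^ j / (Nat.factorial j))
        = ∑ j ∈ Finset.range (n + 1 - k), f k j := by
      intro k hk
      have hk' : k < n := Finset.mem_range.mp hk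
      have h1 : n - k + 1 = n + 1 - k := by omega
      rw [h1, Finset.mul_sum]
      refine Finset.sum_congr rfl fun j _ => ?_
      rw [hf]
      have hax : (a - x) ^ k = (-1 : ℝ) ^ k * (x - a) ^ k := by
        rw [show a - x = -(x - a) by ring, neg_pow]
      have hkf : ((Nat.factorial k : ℕ) : ℝ) ≠ 0 := Nat.cast_ne_zero.mpr (Nat.factorial_ne_zero k)
      have hjf : ((Nat.factorial j : ℕ) : ℝ) ≠ 0 := Nat.cast_ne_zero.mpr (Nat.factorial_ne_zero j)
      simp only [hf, pow_add, hax]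
      field_simp
    rw [Finset.sum_congr rfl step1]
    have flip := Finset.sum_range_diag_flip (n + 1) f
    have hA : ∀ m ∈ Finset.range (n + 1), ∑ k ∈ Finset.range (m + 1), f k (m - k)
        = if m = 0 then F 0 a else 0 := by
      intro m _
      have step2 : ∀ k ∈ Finset.range (m + 1), f k (m - k)
          = (x - a) ^ m * F m a / (Nat.factorial m) * ((-1 : ℝ) ^ k * (m.choose k : ℝ)) := by
        intro k hk
        have hkm : k ≤ m := by
          have := Finset.mem_range.mp hk; omega
        have hsum : k + (m - k) = m := by omega
        rw [hf]
        simp only [hsum]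
        rw [Nat.cast_choose ℝ hkm]
        have h1 : ((Nat.factorial k : ℕ) : ℝ) ≠ 0 := Nat.cast_ne_zero.mpr (Nat.factorial_ne_zero k)
        have h2 : ((Nat.factorial (m - k) : ℕ) : ℝ) ≠ 0 :=
          Nat.cast_ne_zero.mpr (Nat.factorial_ne_zero _)
        have h3 : ((Nat.factorial m : ℕ) : ℝ) ≠ 0 := Nat.cast_ne_zero.mpr (Nat.factorial_ne_zero m)
        field_simp
      rw [Finset.sum_congr rfl step2, ← Finset.mul_sum]
      have halt : (∑ k ∈ Finset.range (m + 1), ((-1 : ℝ) ^ k * (m.choose k : ℝ)))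
          = if m = 0 then 1 else 0 := by
        have h := congrArg (fun z : ℤ => (z : ℝ)) (Int.alternating_sum_range_choose (n := m))
        push_cast at h
        convert h using 2 <;> simp
      rw [halt]
      by_cases hm : m = 0
      · subst hm; simp
      · simp [hm]
    rw [Finset.sum_congr rfl hA] at flip
    have hflipL : ∑ m ∈ Finset.range (n + 1), (if m = 0 then F 0 a else 0) = F 0 a := by
      rw [Finset.sum_ite_eq' (Finset.range (n + 1)) 0 (fun _ => F 0 a)]
      simp
    have hsplit : ∑ m ∈ Finset.range (n + 1), ∑ k ∈ Finset.range (n + 1 - m), f m k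
        = (∑ m ∈ Finset.range n, ∑ k ∈ Finset.range (n + 1 - m), f m k) + f n 0 := by
      rw [Finset.sum_range_succ]
      simp
    have hfn0 : f n 0 = (-1 : ℝ) ^ n * (x - a) ^ n * F n a / (Nat.factorial n) := by
      simp [hf]
    have := flip.symm.trans hflipL  -- not right shape; combine manually
    have hmain : (∑ m ∈ Finset.range n, ∑ k ∈ Finset.range (n + 1 - m), f m k) + f n 0
        = F 0 a := by rw [← hsplit, ← flip, hflipL]
    have hpow : (-1 : ℝ) ^ (n + 1) = -(-1 : ℝ) ^ n := by rw [pow_succ]; ring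
    rw [hpow]
    rw [hfn0] at hmain
    linear_combination hmain
  have expand : ∀ k ∈ Finset.range n, (a - x) ^ k / (Nat.factorial k) * F k x
      = (a - x) ^ k / (Nat.factorial k) * Rrem F a n k x
        + (a - x) ^ k / (Nat.factorial k) *
          (∑ j ∈ Finset.range (n - k + 1), F (k + j) a * (x - a) ^ j / (Nat.factorial j)) := by
    intro k _
    unfold Rrem
    ring
  rw [Finset.sum_congr rfl expand, Finset.sum_add_distrib, key]
  ring

private lemma psi_limit (F : ℕ → ℝ → ℝ) (a b : ℝ) (n : ℕ) (hab : a < b) (hn : 1 ≤ n)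
    (hF : ∀ i < n, ∀ x ∈ Set.Icc a b, HasDerivWithinAt (F i) (F (i + 1) x) (Set.Icc a b) x) :
    Filter.Tendsto
      (fun x => ((∑ k ∈ Finset.range n, (a - x) ^ k / (Nat.factorial k) * F k x) - F 0 a)
        / (x - a) ^ n)
      (nhdsWithin a (Set.Icc a b \ {a}))
      (nhds ((-1 : ℝ) ^ (n + 1) * F n a / (Nat.factorial n))) := by
  rw [Metric.tendsto_nhds]
  intro ε hε
  have hε' : 0 < ε / (2 * (n + 1)) := by positivity
  obtain ⟨δ, hδ, hbnd⟩ := Rrem_bound F a b n hab hn hF _ hε'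
  have h1 : ∀ᶠ x in nhdsWithin a (Set.Icc a b \ {a}), dist x a < δ :=
    eventually_nhdsWithin_of_eventually_nhds (Metric.eventually_nhds_iff_ball.mpr ⟨δ, hδ, fun y hy => hy⟩)
  filter_upwards [h1, eventually_mem_nhdsWithin] with x hxδ hxmem
  have hxI : x ∈ Set.Icc a b := hxmem.1
  have hxa : x ∉ ({a} : Set ℝ) := hxmem.2
  have hxa' : a < x := lt_of_le_of_ne hxI.1 (fun h => hxa (by simp [h.symm]))
  have hxb : x ∈ Set.Ioc a b := ⟨hxa', hxI.2⟩
  have hxδ' : x - a < δ := by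
    rw [Real.dist_eq, abs_of_nonneg (by linarith : (0:ℝ) ≤ x - a)] at hxδ
    exact hxδ
  have hxan : (x - a) ^ n ≠ 0 := pow_ne_zero n (by linarith)
  rw [H_decomp]
  have hxa0 : (0:ℝ) < x - a := by linarith
  -- the main quantity
  set S := ∑ k ∈ Finset.range n, (a - x) ^ k / (Nat.factorial k) * Rrem F a n k x with hS
  have hterm : ∀ k ∈ Finset.range n,
      |(a - x) ^ k / (Nat.factorial k) * Rrem F a n k x| ≤ ε / (2 * (n + 1)) * (x - a) ^ n := by
    intro k hk
    have hkn : k < n := Finset.mem_range.mp hk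
    have hb := hbnd k hkn x hxb hxδ'
    have h2 : |(a - x) ^ k / (Nat.factorial k)| ≤ (x - a) ^ k := by
      rw [abs_div, abs_pow]
      have : |a - x| = x - a := by rw [abs_sub_comm, abs_of_pos hxa0]
      rw [this, abs_of_pos (by exact_mod_cast Nat.cast_pos.mpr (Nat.factorial_pos k))]
      have hfac : (1:ℝ) ≤ (Nat.factorial k : ℝ) := by exact_mod_cast Nat.one_le_iff_ne_zero.mpr (Nat.factorial_ne_zero k)
      calc (x - a) ^ k / (Nat.factorial k : ℝ) ≤ (x - a) ^ k / 1 := by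
            apply div_le_div_of_nonneg_left (by positivity) (by linarith) hfac
        _ = (x - a) ^ k := by ring
    calc |(a - x) ^ k / (Nat.factorial k) * Rrem F a n k x|
        = |(a - x) ^ k / (Nat.factorial k)| * |Rrem F a n k x| := abs_mul _ _
      _ ≤ (x - a) ^ k * (ε / (2 * (n + 1)) * (x - a) ^ (n - k)) := by
          apply mul_le_mul h2 hb (abs_nonneg _) (by positivity)
      _ = ε / (2 * (n + 1)) * (x - a) ^ n := by
          rw [show (x - a) ^ k * (ε / (2 * (n + 1)) * (x - a) ^ (n - k))
            = ε / (2 * (n + 1)) * ((x - a) ^ k * (x - a) ^ (n - k)) from by ring,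
            ← pow_add, show k + (n - k) = n from by omega]
  have hSb : |S| ≤ n * (ε / (2 * (n + 1))) * (x - a) ^ n := by
    calc |S| ≤ ∑ k ∈ Finset.range n, |(a - x) ^ k / (Nat.factorial k) * Rrem F a n k x| :=
          Finset.abs_sum_le_sum_abs _ _
      _ ≤ ∑ _k ∈ Finset.range n, ε / (2 * (n + 1)) * (x - a) ^ n := Finset.sum_le_sum hterm
      _ = n * (ε / (2 * (n + 1))) * (x - a) ^ n := by
          rw [Finset.sum_const, Finset.card_range]; push_cast; ring
  have hquot : ((-1 : ℝ) ^ (n + 1) * (x - a) ^ n * F n a / (Nat.factorial n) + S) / (x - a) ^ n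
      = (-1 : ℝ) ^ (n + 1) * F n a / (Nat.factorial n) + S / (x - a) ^ n := by
    field_simp
  rw [hquot, Real.dist_eq, add_sub_cancel_left, abs_div, abs_of_pos (by positivity : (0:ℝ) < (x - a)^n),
    div_lt_iff₀ (by positivity : (0:ℝ) < (x - a)^n)]
  calc |S| ≤ n * (ε / (2 * (n + 1))) * (x - a) ^ n := hSb
    _ < ε * (x - a) ^ n := by
        have hnn : (0:ℝ) < (n:ℝ) + 1 := by positivity
        have h9 : (n:ℝ) / (2 * (n + 1)) < 1 := by
          rw [div_lt_one (by positivity)]; linarith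
        have h10 : (n:ℝ) * (ε / (2 * (n + 1))) < ε := by
          rw [show (n:ℝ) * (ε / (2 * (n + 1))) = ((n:ℝ) / (2 * (n + 1))) * ε from by ring]
          nlinarith
        nlinarith [pow_pos hxa0 n]

private lemma flett_half (ψ D : ℝ → ℝ) (a b : ℝ) (hab : a < b)
    (hcont : ContinuousOn ψ (Set.Icc a b))
    (hderiv : ∀ x ∈ Set.Ioo a b, HasDerivAt ψ (D x) x)
    (hb : HasDerivWithinAt ψ (D b) (Set.Icc a b) b)
    (hba : ψ a < ψ b) (hDb : D b < 0) :
    ∃ ξ ∈ Set.Ioo a b, D ξ = 0 := by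
  -- find y ∈ (a,b) with ψ y > ψ b
  obtain ⟨y, hy, hyb⟩ : ∃ y ∈ Set.Ioo a b, ψ b < ψ y := by
    have hslope := hasDerivWithinAt_iff_tendsto_slope.mp hb
    have hev1 : ∀ᶠ z in 𝓝[Set.Icc a b \ {b}] b, slope ψ b z < 0 :=
      hslope.eventually_lt_const hDb
    have hev2 : ∀ᶠ z in 𝓝[Set.Icc a b \ {b}] b, a < z :=
      eventually_nhdsWithin_of_eventually_nhds (eventually_gt_nhds hab)
    have hne : (𝓝[Set.Icc a b \ {b}] b).NeBot := by
      have hsub : Set.Ico a b ⊆ Set.Icc a b \ {b} := fun z hz =>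
        ⟨⟨hz.1, hz.2.le⟩, fun h => absurd (h ▸ hz.2) (lt_irrefl b)⟩
      have : (𝓝[Set.Ico a b] b).NeBot := by
        refine mem_closure_iff_nhdsWithin_neBot.mp ?_
        rw [closure_Ico hab.ne]
        exact ⟨hab.le, le_rfl⟩
      exact this.mono (nhdsWithin_mono b hsub)
    obtain ⟨z, hz1, hz2, hz3⟩ := (hev1.and (hev2.and eventually_mem_nhdsWithin)).exists
    have hzb : z < b := lt_of_le_of_ne hz3.1.2 (fun h => hz3.2 h)
    refine ⟨z, ⟨hz2, hzb⟩, ?_⟩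
    have := hz1
    rw [slope_def_field] at this
    -- (ψ z - ψ b)/(z - b) < 0 with z - b < 0
    have h2 : (ψ z - ψ b) / (z - b) < 0 := this
    rcases div_neg_iff.mp h2 with ⟨h3, h4⟩ | ⟨h3, h4⟩
    · linarith
    · linarith
  -- IVT on [a, y]
  obtain ⟨c, hc, hcval⟩ : ∃ c ∈ Set.Icc a y, ψ c = ψ b := by
    have h1 : Set.Icc (ψ a) (ψ y) ⊆ ψ '' Set.Icc a y :=
      intermediate_value_Icc hy.1.le (hcont.mono (Set.Icc_subset_Icc le_rfl hy.2.le))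
    have h2 : ψ b ∈ Set.Icc (ψ a) (ψ y) := ⟨hba.le, hyb.le⟩
    obtain ⟨c, hc, hcv⟩ := h1 h2
    exact ⟨c, hc, hcv⟩
  have hcb : c < b := lt_of_le_of_lt hc.2 hy.2
  obtain ⟨ξ, hξ, hξ0⟩ := exists_hasDerivAt_eq_zero hcb
    (hcont.mono (Set.Icc_subset_Icc hc.1 le_rfl)) hcval
    (fun x hx => hderiv x ⟨lt_of_le_of_lt hc.1 hx.1, hx.2⟩)
  exact ⟨ξ, ⟨lt_of_le_of_lt hc.1 hξ.1, hξ.2⟩, hξ0⟩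

private lemma flett_core (ψ D : ℝ → ℝ) (a b c : ℝ) (hab : a < b) (hc : 0 < c)
    (hcont : ContinuousOn ψ (Set.Icc a b))
    (hderiv : ∀ x ∈ Set.Ioo a b, HasDerivAt ψ (D x) x)
    (hb : HasDerivWithinAt ψ (D b) (Set.Icc a b) b)
    (hDb : D b = c * (ψ a - ψ b)) :
    ∃ ξ ∈ Set.Ioo a b, D ξ = 0 := by
  rcases lt_trichotomy (ψ a) (ψ b) with h | h | h
  · exact flett_half ψ D a b hab hcont hderiv hb h
      (hDb ▸ mul_neg_of_pos_of_neg hc (by linarith))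
  · exact exists_hasDerivAt_eq_zero hab hcont h hderiv
  · have hneg := flett_half (fun x => -ψ x) (fun x => -D x) a b hab hcont.neg
      (fun x hx => (hderiv x hx).neg) hb.neg (by simpa using h)
      (by simp only [neg_neg, hDb]; nlinarith)
    obtain ⟨ξ, hξ, h0⟩ := hneg
    exact ⟨ξ, hξ, by simpa using h0⟩

private lemma sumH_deriv (F : ℕ → ℝ → ℝ) (a b : ℝ) (n : ℕ)
    (hF : ∀ i < n, ∀ x ∈ Set.Icc a b, HasDerivWithinAt (F i) (F (i + 1) x) (Set.Icc a b) x) :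
    ∀ m, m + 1 ≤ n → ∀ x ∈ Set.Icc a b,
      HasDerivWithinAt
        (fun y => ∑ k ∈ Finset.range (m + 1), (a - y) ^ k / (Nat.factorial k) * F k y)
        ((a - x) ^ m / (Nat.factorial m) * F (m + 1) x) (Set.Icc a b) x := by
  intro m
  induction m with
  | zero =>
      intro hm x hx
      have h0 := hF 0 hm x hx
      have : HasDerivWithinAt (fun y => (a - y) ^ 0 / ((Nat.factorial 0 : ℕ) : ℝ) * F 0 y)
          ((a - x) ^ 0 / ((Nat.factorial 0 : ℕ) : ℝ) * F 1 x) (Set.Icc a b) x := by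
        simpa using h0
      simpa [Finset.sum_range_one] using this
  | succ m ih =>
      intro hm x hx
      have ihm := ih (by omega) x hx
      -- derivative of the new term
      have h1 : HasDerivWithinAt (fun y => (a - y) ^ (m + 1))
          (((m + 1 : ℕ) : ℝ) * (a - x) ^ m * (-1)) (Set.Icc a b) x :=
        ((hasDerivWithinAt_id x _).const_sub a).pow (m + 1)
      have h2 : HasDerivWithinAt (fun y => (a - y) ^ (m + 1) / ((m + 1).factorial : ℝ))
          ((((m + 1 : ℕ) : ℝ) * (a - x) ^ m * (-1)) / ((m + 1).factorial : ℝ))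
          (Set.Icc a b) x := h1.div_const _
      have h3 := h2.mul (hF (m + 1) (by omega) x hx)
      have h4 := ihm.add h3
      have heq : (a - x) ^ m / (Nat.factorial m) * F (m + 1) x +
          ((((m + 1 : ℕ) : ℝ) * (a - x) ^ m * (-1)) / ((m + 1).factorial : ℝ) * F (m + 1) x +
            (a - x) ^ (m + 1) / ((m + 1).factorial : ℝ) * F (m + 2) x)
          = (a - x) ^ (m + 1) / (Nat.factorial (m + 1)) * F (m + 2) x := by
        have hm1 : ((m + 1).factorial : ℝ) = (m + 1) * m.factorial := by
          rw [Nat.factorial_succ]; push_cast; ring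
        have hmf : (m.factorial : ℝ) ≠ 0 := Nat.cast_ne_zero.mpr (Nat.factorial_ne_zero m)
        rw [hm1]
        field_simp
        push_cast
        ring
      have h5 : HasDerivWithinAt
          (fun y => (∑ k ∈ Finset.range (m + 1), (a - y) ^ k / (Nat.factorial k) * F k y) +
            (a - y) ^ (m + 1) / ((m + 1).factorial : ℝ) * F (m + 1) y)
          ((a - x) ^ (m + 1) / (Nat.factorial (m + 1)) * F (m + 2) x) (Set.Icc a b) x :=
        heq ▸ h4
      refine h5.congr (fun y _ => ?_) ?_
      · rw [Finset.sum_range_succ]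
      · rw [Finset.sum_range_succ]

/-- Pawlikowska's extension of Flett's theorem. Here `F i` denotes the `i`-th
derivative of `f = F 0` on `[a, b]` (one-sided derivatives at the endpoints). -/
theorem pawlikowska (F : ℕ → ℝ → ℝ) (a b : ℝ) (hab : a < b) (n : ℕ) (hn : 1 ≤ n)
    (hF : ∀ i < n, ∀ x ∈ Set.Icc a b, HasDerivWithinAt (F i) (F (i + 1) x) (Set.Icc a b) x)
    (hend : F n a = F n b) :
    ∃ ξ ∈ Set.Ioo a b,
      F 0 ξ - F 0 a =
        ∑ i ∈ Finset.Icc 1 n, ((-1 : ℝ) ^ (i + 1) / (Nat.factorial i)) * (ξ - a) ^ i * F i ξ := by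
  obtain ⟨m, rfl⟩ : ∃ m, n = m + 1 := ⟨n - 1, by omega⟩
  have hba : b ≠ a := hab.ne'
  set I := Set.Icc a b with hI
  set H : ℝ → ℝ :=
    fun x => (∑ k ∈ Finset.range (m + 1), (a - x) ^ k / (Nat.factorial k) * F k x) - F 0 a
    with hHdef
  set H' : ℝ → ℝ := fun x => (a - x) ^ m / (Nat.factorial m) * F (m + 1) x with hH'def
  have hHd : ∀ x ∈ I, HasDerivWithinAt H (H' x) I x :=
    fun x hx => ((sumH_deriv F a b (m + 1) hF m le_rfl x hx).sub_const (F 0 a))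
  have hHcont : ContinuousOn H I := fun x hx => (hHd x hx).continuousWithinAt
  set L : ℝ := (-1 : ℝ) ^ (m + 1 + 1) * F (m + 1) a / (Nat.factorial (m + 1)) with hLdef
  set ψ : ℝ → ℝ := fun x => if x = a then L else H x / (x - a) ^ (m + 1) with hψdef
  set D : ℝ → ℝ :=
    fun x => (H' x * (x - a) ^ (m + 1) - H x * (((m : ℝ) + 1) * (x - a) ^ m))
      / ((x - a) ^ (m + 1)) ^ 2 with hDdef
  have hψa : ψ a = L := if_pos rfl
  have hψbv : ψ b = H b / (b - a) ^ (m + 1) := if_neg hba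
  -- derivative of the denominator
  have hden : ∀ (x : ℝ) (s : Set ℝ), HasDerivWithinAt (fun y => (y - a) ^ (m + 1))
      (((m : ℝ) + 1) * (x - a) ^ m) s x := by
    intro x s
    have h : HasDerivWithinAt _ _ s x := ((hasDerivWithinAt_id x s).sub_const a).pow (m + 1)
    simp only [id_eq, Nat.add_sub_cancel, mul_one] at h
    refine h.congr_deriv ?_
    push_cast
    ring
  -- interior derivative of ψ
  have hψd : ∀ x ∈ Set.Ioo a b, HasDerivAt ψ (D x) x := by
    intro x hx
    have hxa : x ≠ a := hx.1.ne'
    have hHx : HasDerivAt H (H' x) x :=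
      (hHd x (Set.Ioo_subset_Icc_self hx)).hasDerivAt (Icc_mem_nhds hx.1 hx.2)
    have hdx : HasDerivAt (fun y => (y - a) ^ (m + 1)) (((m : ℝ) + 1) * (x - a) ^ m) x := by
      have := hden x Set.univ
      rwa [hasDerivWithinAt_univ] at this
    have hq := hHx.div hdx (pow_ne_zero _ (sub_ne_zero.mpr hxa))
    refine hq.congr_of_eventuallyEq ?_
    exact Filter.eventually_of_mem (isOpen_compl_singleton.mem_nhds hxa)
      (fun y hy => if_neg hy)
  -- one-sided derivative of ψ at b
  have hψb : HasDerivWithinAt ψ (D b) I b := by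
    have hHb : HasDerivWithinAt H (H' b) I b := hHd b (Set.right_mem_Icc.mpr hab.le)
    have hq := hHb.div (hden b I) (pow_ne_zero _ (sub_ne_zero.mpr hba))
    refine hq.congr_of_eventuallyEq ?_ (if_neg hba)
    exact Filter.eventually_of_mem
      (mem_nhdsWithin_of_mem_nhds (isOpen_compl_singleton.mem_nhds hba))
      (fun y hy => if_neg hy)
  -- continuity of ψ
  have hψcont : ContinuousOn ψ I := by
    intro x hx
    by_cases hxa : x = a
    · rw [hxa]
      rw [← continuousWithinAt_diff_self]
      have hT := psi_limit F a b (m + 1) hab (by omega) hF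
      have heq : (fun y => H y / (y - a) ^ (m + 1)) =ᶠ[nhdsWithin a (I \ {a})] ψ :=
        Filter.eventually_of_mem self_mem_nhdsWithin
          (fun y hy => (if_neg hy.2).symm)
      have := hT.congr' heq
      rwa [ContinuousWithinAt, hψa]
    · have hcq : ContinuousWithinAt (fun y => H y / (y - a) ^ (m + 1)) I x :=
        (hHcont x hx).div
          (((continuous_id.sub continuous_const).pow (m + 1)).continuousWithinAt)
          (pow_ne_zero _ (sub_ne_zero.mpr hxa))
      refine hcq.congr_of_eventuallyEq ?_ (if_neg hxa)
      exact Filter.eventually_of_mem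
        (mem_nhdsWithin_of_mem_nhds (isOpen_compl_singleton.mem_nhds hxa))
        (fun y hy => if_neg hy)
  -- the endpoint identity for flett_core
  have hDb : D b = (((m : ℝ) + 1) / (b - a)) * (ψ a - ψ b) := by
    rw [hψa, hψbv, hDdef, hLdef, hH'def]
    simp only
    rw [← hend]
    have h1 : (a - b) ^ m = (-1 : ℝ) ^ m * (b - a) ^ m := by
      rw [show a - b = -(b - a) by ring, neg_pow]
    have h2 : (-1 : ℝ) ^ (m + 1 + 1) = (-1 : ℝ) ^ m := by
      rw [pow_succ, pow_succ]; ring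
    have h3 : ((m + 1).factorial : ℝ) = ((m : ℝ) + 1) * (m.factorial : ℝ) := by
      rw [Nat.factorial_succ]; push_cast; ring
    have hb0 : b - a ≠ 0 := sub_ne_zero.mpr hba
    have hf0 : (m.factorial : ℝ) ≠ 0 := Nat.cast_ne_zero.mpr (Nat.factorial_ne_zero m)
    rw [h1, h2, h3]
    field_simp
    ring
  obtain ⟨ξ, hξ, hDξ⟩ := flett_core ψ D a b (((m : ℝ) + 1) / (b - a)) hab
    (div_pos (by positivity) (sub_pos.mpr hab)) hψcont hψd hψb hDb
  -- make the local definitions opaque from now on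
  clear_value H H' L ψ D
  -- extract the equation
  have hξa : (0 : ℝ) < ξ - a := sub_pos.mpr hξ.1
  have hnum : H' ξ * (ξ - a) ^ (m + 1) - H ξ * (((m : ℝ) + 1) * (ξ - a) ^ m) = 0 := by
    have hden2 : (((ξ - a) ^ (m + 1)) ^ 2 : ℝ) ≠ 0 := pow_ne_zero _ (pow_ne_zero _ hξa.ne')
    have h0 := hDξ
    rw [hDdef] at h0
    exact (div_eq_zero_iff.mp h0).resolve_right hden2
  have h3 : ((m + 1).factorial : ℝ) = ((m : ℝ) + 1) * (m.factorial : ℝ) := by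
    rw [Nat.factorial_succ]; push_cast; ring
  have hmf : (m.factorial : ℝ) ≠ 0 := Nat.cast_ne_zero.mpr (Nat.factorial_ne_zero m)
  have hnum2 : (a - ξ) ^ m / (m.factorial : ℝ) * F (m + 1) ξ * (ξ - a) ^ (m + 1)
      = H ξ * (((m : ℝ) + 1) * (ξ - a) ^ m) := by
    have h0 := hnum
    rw [hH'def] at h0
    linarith [h0]
  have hprod : (a - ξ) ^ m / (m.factorial : ℝ) * F (m + 1) ξ * (ξ - a) ^ (m + 1)
      = -((a - ξ) ^ (m + 1) / (((m + 1).factorial : ℕ) : ℝ) * F (m + 1) ξ)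
        * (((m : ℝ) + 1) * (ξ - a) ^ m) := by
    rw [h3, pow_succ (ξ - a) m, pow_succ (a - ξ) m]
    field_simp
    ring
  have hkey : H ξ = -((a - ξ) ^ (m + 1) / (((m + 1).factorial : ℕ) : ℝ) * F (m + 1) ξ) := by
    have hne : (((m : ℝ) + 1) * (ξ - a) ^ m) ≠ 0 :=
      mul_ne_zero (by positivity) (pow_ne_zero _ hξa.ne')
    exact mul_right_cancel₀ hne (hnum2.symm.trans hprod)
  -- final algebra
  have hkey2 : (∑ k ∈ Finset.range (m + 1), (a - ξ) ^ k / ((Nat.factorial k : ℕ) : ℝ) * F k ξ)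
      - F 0 a = -((a - ξ) ^ (m + 1) / (((m + 1).factorial : ℕ) : ℝ) * F (m + 1) ξ) := by
    rw [← hkey, hHdef]
  rw [Finset.sum_range_succ'] at hkey2
  norm_num at hkey2
  refine ⟨ξ, hξ, ?_⟩
  rw [← Finset.Ico_add_one_right_eq_Icc, Finset.sum_Ico_eq_sum_range]
  norm_num
  rw [Finset.sum_range_succ]
  have hterm : ∀ i ∈ Finset.range m,
      ((-1 : ℝ) ^ (1 + i + 1) / ((Nat.factorial (1 + i) : ℕ) : ℝ)) * (ξ - a) ^ (1 + i)
        * F (1 + i) ξ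
      = -((a - ξ) ^ (i + 1) / ((Nat.factorial (i + 1) : ℕ) : ℝ) * F (i + 1) ξ) := by
    intro i _
    have hsgn : (a - ξ) ^ (i + 1) = (-1 : ℝ) ^ (i + 1) * (ξ - a) ^ (i + 1) := by
      rw [show a - ξ = -(ξ - a) by ring, neg_pow]
    rw [hsgn, show 1 + i = i + 1 from by omega, pow_succ]
    ring
  rw [Finset.sum_congr rfl hterm]
  have hlast : ((-1 : ℝ) ^ (1 + m + 1) / ((Nat.factorial (1 + m) : ℕ) : ℝ)) * (ξ - a) ^ (1 + m)
      * F (1 + m) ξ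
      = -((a - ξ) ^ (m + 1) / ((Nat.factorial (m + 1) : ℕ) : ℝ) * F (m + 1) ξ) := by
    have hsgn : (a - ξ) ^ (m + 1) = (-1 : ℝ) ^ (m + 1) * (ξ - a) ^ (m + 1) := by
      rw [show a - ξ = -(ξ - a) by ring, neg_pow]
    rw [hsgn, show 1 + m = m + 1 from by omega, pow_succ]
    ring
  rw [hlast, Finset.sum_neg_distrib]
  linarith [hkey2]
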